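/- Let d, l, n, s be integers with d ≥ 1, l ≥ 1, d + l ≤ n, and 1 ≤ s ≤ ⌊(n−d−l)/(d+l+1)⌋, and set m = (n+1)s + n. Let 𝓘_{m,n,s+1} = { [A, f_{s+1}(A)] : A ⊆ [m], |A| = n }. If D is a subset of [m] with |D| = n + l that is not covered by any element of 𝓘_{m,n,s+1}, then no superset of D in [m] is covered by any element of 𝓘_{m,n,s+1}. -/

import Mathlib

/-- The point of the circular representation of `[N] = {1, …, N}` reached from the
point `x` after `t` clockwise steps. -/
def cpt (N x t : ℕ) : ℕ := (x - 1 + t) % N + 1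

/-- The block of `len` clockwise-consecutive points of the circular representation
of `[N]` starting at the point `x`. -/
def cblock (N x len : ℕ) : Finset ℕ := (Finset.range len).image (cpt N x)

/-- Data describing a candidate block structure on the circular representation of a
set `[N]`: the number `p` of blocks, the first (clockwise) element `b i` of the `i`-th
block `B i`, the length `lenB i` of `B i`, and the length `lenG i` of the gap `G i`
following `B i` clockwise (only the indices `i < p` are relevant). -/
structure CircData where
  p : ℕ
  b : ℕ → ℕ
  lenB : ℕ → ℕ
  lenG : ℕ → ℕ

/-- The `i`-th block `B i` of the data `S` on the circular representation of `[N]`. -/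
def CircData.Blk (S : CircData) (N i : ℕ) : Finset ℕ := cblock N (S.b i) (S.lenB i)

/-- The `i`-th gap `G i` of the data `S`, which follows the block `B i` clockwise. -/
def CircData.Gap (S : CircData) (N i : ℕ) : Finset ℕ :=
  cblock N (cpt N (S.b i) (S.lenB i)) (S.lenG i)

/-- `S` describes the block structure `B_1, G_1, B_2, G_2, …, B_p, G_p` of the set `A`
with respect to the density `δ` on the circular representation of `[N]`. -/
def IsBlockStructure (N : ℕ) (A : Finset ℕ) (δ : ℝ) (S : CircData) : Prop :=
  0 < S.p ∧
  -- each block is nonempty (it contains its first element `b i`)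
  (∀ i < S.p, 0 < S.lenB i) ∧
  -- the blocks and gaps are arranged consecutively clockwise, cyclically
  (∀ i, i + 1 < S.p → S.b (i + 1) = cpt N (S.b i) (S.lenB i + S.lenG i)) ∧
  S.b 0 = cpt N (S.b (S.p - 1)) (S.lenB (S.p - 1) + S.lenG (S.p - 1)) ∧
  -- the blocks and gaps form a partition of `[N]`
  ((Finset.range S.p).biUnion (fun i => S.Blk N i ∪ S.Gap N i) = Finset.Icc 1 N) ∧
  (∀ i < S.p, ∀ j < S.p, i ≠ j →
    Disjoint (S.Blk N i ∪ S.Gap N i) (S.Blk N j ∪ S.Gap N j)) ∧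
  (∀ i < S.p, Disjoint (S.Blk N i) (S.Gap N i)) ∧
  -- (i) the first (clockwise) element of each block belongs to `A`
  (∀ i < S.p, S.b i ∈ A) ∧
  -- (ii) the gaps are disjoint from `A`
  (∀ i < S.p, ∀ x ∈ S.Gap N i, x ∉ A) ∧
  -- (iii) `δ·|A ∩ B i| − 1 < |B i| ≤ δ·|A ∩ B i|`
  (∀ i < S.p, δ * ((A ∩ S.Blk N i).card : ℝ) - 1 < ((S.Blk N i).card : ℝ) ∧
    ((S.Blk N i).card : ℝ) ≤ δ * ((A ∩ S.Blk N i).card : ℝ)) ∧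
  -- (iv) every proper initial segment `[b i, y] ⊊ B i` satisfies
  -- `|[b i, y]| + 1 ≤ δ·|[b i, y] ∩ A|`
  (∀ i < S.p, ∀ t, 0 < t → t < S.lenB i →
    ((cblock N (S.b i) t).card : ℝ) + 1 ≤ δ * ((cblock N (S.b i) t ∩ A).card : ℝ))

/-- The union `𝒢_δ(A) = G_1 ∪ ⋯ ∪ G_p` of the gaps of the block structure `S`. -/
def CircData.gapsUnion (S : CircData) (N : ℕ) : Finset ℕ :=
  (Finset.range S.p).biUnion (S.Gap N)

/-- `f_δ(A) = A ∪ 𝒢_δ(A)`, computed from the block structure `S` of `A` on `[N]`. -/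
def fdelta (A : Finset ℕ) (S : CircData) (N : ℕ) : Finset ℕ := A ∪ S.gapsUnion N

namespace BSLib

lemma cpt_sub_one (N x t : ℕ) : cpt N x t - 1 = (x - 1 + t) % N := by
  simp [cpt]

lemma cpt_cpt (N x a b : ℕ) : cpt N (cpt N x a) b = cpt N x (a + b) := by
  simp only [cpt, Nat.add_sub_cancel]
  rw [Nat.mod_add_mod, Nat.add_assoc]

lemma cpt_mod (N x a : ℕ) : cpt N x (a % N) = cpt N x a := by
  simp only [cpt]
  rw [Nat.add_mod_mod]

lemma cpt_one_le (N x a : ℕ) : 1 ≤ cpt N x a := by simp [cpt]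

lemma cpt_le (N x a : ℕ) (hN : 1 ≤ N) : cpt N x a ≤ N := by
  have := Nat.mod_lt (x - 1 + a) (show 0 < N by omega)
  simp only [cpt]; omega

lemma cpt_mem_Icc (N x a : ℕ) (hN : 1 ≤ N) : cpt N x a ∈ Finset.Icc 1 N := by
  simp [Finset.mem_Icc, cpt_one_le, cpt_le, hN]

lemma cpt_zero (N y : ℕ) (hy : y ∈ Finset.Icc 1 N) : cpt N y 0 = y := by
  simp only [Finset.mem_Icc] at hy
  have : y - 1 < N := by omega
  simp [cpt, Nat.mod_eq_of_lt this]; omega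

lemma cpt_N (N x : ℕ) : cpt N x N = cpt N x 0 := by
  rw [← cpt_mod]
  simp [Nat.mod_self]

lemma cpt_inj_iff (N x a b : ℕ) : cpt N x a = cpt N x b ↔ a % N = b % N := by
  constructor
  · intro h
    simp only [cpt, Nat.add_left_cancel_iff] at h
    have h2 : (x - 1 + a) % N = (x - 1 + b) % N := by omega
    exact Nat.ModEq.add_left_cancel' (x-1) h2
  · intro h; rw [← cpt_mod, h, cpt_mod]

lemma cpt_left_cancel (N y y' t : ℕ) (hy : y ∈ Finset.Icc 1 N) (hy' : y' ∈ Finset.Icc 1 N)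
    (h : cpt N y t = cpt N y' t) : y = y' := by
  simp only [Finset.mem_Icc] at hy hy'
  have hN : 1 ≤ N := by omega
  simp only [cpt] at h
  have h2 : (y - 1 + t) % N = (y' - 1 + t) % N := by omega
  have h3 : (y - 1) % N = (y' - 1) % N := Nat.ModEq.add_right_cancel' t h2
  rw [Nat.mod_eq_of_lt (by omega), Nat.mod_eq_of_lt (by omega)] at h3
  omega

/-- clockwise distance from x to y -/
def cdist (N x y : ℕ) : ℕ := (N + (y - 1) - (x - 1) % N) % N

lemma cdist_lt (N x y : ℕ) (hN : 1 ≤ N) : cdist N x y < N :=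
  Nat.mod_lt _ (by omega)

lemma cpt_cdist (N x y : ℕ) (hy : y ∈ Finset.Icc 1 N) : cpt N x (cdist N x y) = y := by
  simp only [Finset.mem_Icc] at hy
  have hN : 1 ≤ N := by omega
  simp only [cpt, cdist]
  obtain ⟨q, r, hr, hqr⟩ : ∃ q r, r = (x-1) % N ∧ x - 1 = N * q + r :=
    ⟨(x-1)/N, (x-1)%N, rfl, (Nat.div_add_mod _ _).symm⟩
  have hrN : r < N := by rw [hr]; exact Nat.mod_lt _ (by omega)
  have h1 : (x - 1 + (N + (y - 1) - (x - 1) % N) % N) % N = (x - 1 + (N + (y-1) - r)) % N := by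
    rw [Nat.add_mod_mod, hr]
  rw [h1]
  have hnl : N * (q + 1) = N * q + N := by ring
  have h2 : x - 1 + (N + (y - 1) - r) = N * (q + 1) + (y - 1) := by omega
  rw [h2, Nat.mul_add_mod, Nat.mod_eq_of_lt (by omega)]
  omega

lemma cdist_self (N y : ℕ) (hy : y ∈ Finset.Icc 1 N) : cdist N y y = 0 := by
  simp only [Finset.mem_Icc] at hy
  simp only [cdist]
  rw [Nat.mod_eq_of_lt (show y - 1 < N by omega)]
  have : N + (y - 1) - (y - 1) = N := by omega
  rw [this, Nat.mod_self]

lemma cdist_eq_zero (N x y : ℕ) (hx : x ∈ Finset.Icc 1 N) (hy : y ∈ Finset.Icc 1 N)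
    (h : cdist N x y = 0) : x = y := by
  have := cpt_cdist N x y hy
  rw [h, cpt_zero N x hx] at this; exact this

lemma cdist_unique (N x y j : ℕ) (hy : y ∈ Finset.Icc 1 N) (hj : j < N)
    (h : cpt N x j = y) : j = cdist N x y := by
  have h2 := cpt_cdist N x y hy
  have hN : 1 ≤ N := by omega
  have := (cpt_inj_iff N x j (cdist N x y)).mp (by rw [h, h2])
  rwa [Nat.mod_eq_of_lt hj, Nat.mod_eq_of_lt (cdist_lt N x y hN)] at this

lemma mem_cblock (N x L y : ℕ) : y ∈ cblock N x L ↔ ∃ j < L, cpt N x j = y := by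
  simp [cblock, Finset.mem_image, Finset.mem_range]

lemma mem_cblock_of_lt (N x L j : ℕ) (hj : j < L) : cpt N x j ∈ cblock N x L :=
  (mem_cblock N x L _).mpr ⟨j, hj, rfl⟩

lemma cblock_subset_Icc (N x L : ℕ) (hN : 1 ≤ N) : cblock N x L ⊆ Finset.Icc 1 N := by
  intro y hy
  obtain ⟨j, _, rfl⟩ := (mem_cblock N x L y).mp hy
  exact cpt_mem_Icc N x j hN

lemma mem_cblock_iff_cdist (N x L y : ℕ) (hL : L ≤ N) (hN : 1 ≤ N) :
    y ∈ cblock N x L ↔ y ∈ Finset.Icc 1 N ∧ cdist N x y < L := by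
  constructor
  · intro hy
    obtain ⟨j, hj, rfl⟩ := (mem_cblock N x L _).mp hy
    have hmem := cpt_mem_Icc N x j hN
    have := cdist_unique N x _ j hmem (by omega) rfl
    exact ⟨hmem, by omega⟩
  · rintro ⟨hy, hd⟩
    exact (mem_cblock N x L y).mpr ⟨cdist N x y, hd, cpt_cdist N x y hy⟩

lemma card_cblock (N x L : ℕ) (hL : L ≤ N) : (cblock N x L).card = L := by
  rw [cblock, Finset.card_image_of_injOn, Finset.card_range]
  intro a ha b hb hab
  simp only [Finset.coe_range, Set.mem_Iio] at ha hb
  have := (cpt_inj_iff N x a b).mp hab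
  rwa [Nat.mod_eq_of_lt (by omega), Nat.mod_eq_of_lt (by omega)] at this

lemma cblock_add (N x a b : ℕ) :
    cblock N x (a + b) = cblock N x a ∪ cblock N (cpt N x a) b := by
  ext y
  simp only [Finset.mem_union, mem_cblock]
  constructor
  · rintro ⟨j, hj, rfl⟩
    rcases lt_or_ge j a with h | h
    · exact Or.inl ⟨j, h, rfl⟩
    · exact Or.inr ⟨j - a, by omega, by rw [cpt_cpt]; congr 1; omega⟩
  · rintro (⟨j, hj, rfl⟩ | ⟨j, hj, rfl⟩)
    · exact ⟨j, by omega, rfl⟩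
    · exact ⟨a + j, by omega, by rw [cpt_cpt]⟩

lemma cblock_disjoint_consec (N x a b : ℕ) (hab : a + b ≤ N) :
    Disjoint (cblock N x a) (cblock N (cpt N x a) b) := by
  rw [Finset.disjoint_left]
  intro y hy hy'
  obtain ⟨j, hj, rfl⟩ := (mem_cblock N x a _).mp hy
  obtain ⟨j', hj', h⟩ := (mem_cblock N _ b _).mp hy'
  rw [cpt_cpt] at h
  have := (cpt_inj_iff N x (a + j') j).mp h
  rw [Nat.mod_eq_of_lt (by omega), Nat.mod_eq_of_lt (by omega)] at this
  omega

lemma cblock_full (N x L : ℕ) (hN : 1 ≤ N) (hL : N ≤ L) : cblock N x L = Finset.Icc 1 N := by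
  apply Finset.Subset.antisymm (cblock_subset_Icc N x L hN)
  intro y hy
  exact (mem_cblock N x L y).mpr ⟨cdist N x y, by have := cdist_lt N x y hN; omega,
    cpt_cdist N x y hy⟩

lemma cblock_canon (N x L : ℕ) : cblock N x L = cblock N (cpt N x 0) L := by
  ext y; simp only [mem_cblock]
  constructor <;> rintro ⟨j, hj, rfl⟩ <;> exact ⟨j, hj, by rw [cpt_cpt, Nat.zero_add]⟩

end BSLib

namespace BSLib

/-- weighted sum of the arc of length `L` starting at `x`: `(s+1)·|A∩arc| − L`. -/
def wsum (N s : ℕ) (A : Finset ℕ) (x L : ℕ) : ℤ :=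
  ((s : ℤ) + 1) * ((A ∩ cblock N x L).card : ℤ) - (L : ℤ)

lemma wsum_zero (N s : ℕ) (A : Finset ℕ) (x : ℕ) : wsum N s A x 0 = 0 := by
  simp [wsum, cblock]

lemma wsum_add (N s : ℕ) (A : Finset ℕ) (x a b : ℕ) (hab : a + b ≤ N) :
    wsum N s A x (a + b) = wsum N s A x a + wsum N s A (cpt N x a) b := by
  have hd : Disjoint (A ∩ cblock N x a) (A ∩ cblock N (cpt N x a) b) :=
    Finset.disjoint_of_subset_left Finset.inter_subset_right
      (Finset.disjoint_of_subset_right Finset.inter_subset_right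
        (cblock_disjoint_consec N x a b hab))
  have : A ∩ cblock N x (a + b) = (A ∩ cblock N x a) ∪ (A ∩ cblock N (cpt N x a) b) := by
    rw [cblock_add, Finset.inter_union_distrib_left]
  rw [wsum, this, Finset.card_union_of_disjoint hd]
  simp [wsum]; push_cast; ring

lemma wsum_one (N s : ℕ) (A : Finset ℕ) (x : ℕ) :
    wsum N s A x 1 = if cpt N x 0 ∈ A then (s : ℤ) else -1 := by
  have hb : cblock N x 1 = {cpt N x 0} := by
    ext y
    simp only [mem_cblock, Finset.mem_singleton]
    constructor
    · rintro ⟨j, hj, rfl⟩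
      have : j = 0 := by omega
      rw [this]
    · rintro rfl; exact ⟨0, by omega, rfl⟩
  rw [wsum, hb]
  by_cases h : cpt N x 0 ∈ A
  · rw [Finset.inter_singleton_of_mem h, if_pos h]; simp
  · rw [Finset.inter_singleton_of_notMem h, if_neg h]; simp

lemma wsum_succ (N s : ℕ) (A : Finset ℕ) (x L : ℕ) (hL : L + 1 ≤ N) :
    wsum N s A x (L + 1) = wsum N s A x L + (if cpt N x L ∈ A then (s : ℤ) else -1) := by
  rw [wsum_add N s A x L 1 hL, wsum_one, cpt_cpt, Nat.add_zero]

lemma wsum_canon (N s : ℕ) (A : Finset ℕ) (x L : ℕ) :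
    wsum N s A x L = wsum N s A (cpt N x 0) L := by
  rw [wsum, wsum, ← cblock_canon]

end BSLib

namespace BSLib

section Derived

variable (m s n : ℕ) (A : Finset ℕ) (S : CircData)

/-- integer version of condition (iii) plus length bounds -/
lemma blk_sizes (hm1 : 1 ≤ m) (hs1 : 1 ≤ s) (hA : A ⊆ Finset.Icc 1 m) (hAcard : A.card = n)
    (hmn : m = (s + 1) * n + s) (hS : IsBlockStructure m A ((s : ℝ) + 1) S) :
    ∀ i < S.p, S.lenB i ≤ m ∧ (S.Blk m i).card = S.lenB i ∧
      S.lenB i = (s + 1) * (A ∩ S.Blk m i).card ∧ S.lenG i ≤ m ∧ (S.Gap m i).card = S.lenG i := by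
  obtain ⟨hp, hlenB, hcons, hwrap, hpart, hdisj, hbg, hbA, hgA, hiii, hiv⟩ := hS
  intro i hi
  have hci : ((S.Blk m i).card : ℝ) ≤ ((s : ℝ) + 1) * ((A ∩ S.Blk m i).card : ℝ) :=
    (hiii i hi).2
  have hci2 : ((s : ℝ) + 1) * ((A ∩ S.Blk m i).card : ℝ) - 1 < ((S.Blk m i).card : ℝ) :=
    (hiii i hi).1
  have hle : (S.Blk m i).card ≤ (s + 1) * (A ∩ S.Blk m i).card := by exact_mod_cast hci
  have hge : (s + 1) * (A ∩ S.Blk m i).card ≤ (S.Blk m i).card := by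
    have : ((s : ℝ) + 1) * ((A ∩ S.Blk m i).card : ℝ) < ((S.Blk m i).card : ℝ) + 1 := by
      linarith
    have h2 : (s + 1) * (A ∩ S.Blk m i).card < (S.Blk m i).card + 1 := by exact_mod_cast this
    omega
  have hcard : (S.Blk m i).card = (s + 1) * (A ∩ S.Blk m i).card := le_antisymm hle hge
  have hlBm : S.lenB i ≤ m := by
    by_contra hlt
    push_neg at hlt
    have hfull : S.Blk m i = Finset.Icc 1 m := cblock_full m _ _ hm1 (by omega)
    have h1 : (S.Blk m i).card = m := by rw [hfull, Nat.card_Icc]; omega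
    have h2 : A ∩ S.Blk m i = A := by
      rw [hfull]; exact Finset.inter_eq_left.mpr hA
    rw [h1, h2, hAcard] at hcard
    nlinarith [hcard]
  have hbcard : (S.Blk m i).card = S.lenB i := card_cblock m _ _ hlBm
  have hlGm : S.lenG i ≤ m := by
    by_contra hlt
    push_neg at hlt
    have hfull : S.Gap m i = Finset.Icc 1 m := cblock_full m _ _ hm1 (by omega)
    have : S.b i ∈ S.Gap m i := by
      rw [hfull]; exact hA (hbA i hi)
    exact (hgA i hi _ this) (hbA i hi)
  have hgcard : (S.Gap m i).card = S.lenG i := card_cblock m _ _ hlGm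
  exact ⟨hlBm, hbcard, by omega, hlGm, hgcard⟩

/-- total length of blocks and gaps is `m` -/
lemma chunks_total (hm1 : 1 ≤ m) (hs1 : 1 ≤ s) (hA : A ⊆ Finset.Icc 1 m) (hAcard : A.card = n)
    (hmn : m = (s + 1) * n + s) (hS : IsBlockStructure m A ((s : ℝ) + 1) S) :
    ∑ i ∈ Finset.range S.p, (S.lenB i + S.lenG i) = m := by
  have hsizes := blk_sizes m s n A S hm1 hs1 hA hAcard hmn hS
  obtain ⟨hp, hlenB, hcons, hwrap, hpart, hdisj, hbg, hbA, hgA, hiii, hiv⟩ := hS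
  have hcb : ((Finset.range S.p).biUnion (fun i => S.Blk m i ∪ S.Gap m i)).card
      = ∑ i ∈ Finset.range S.p, (S.Blk m i ∪ S.Gap m i).card := by
    apply Finset.card_biUnion
    intro i hi j hj hij
    exact hdisj i (Finset.mem_range.mp hi) j (Finset.mem_range.mp hj) hij
  rw [hpart, Nat.card_Icc] at hcb
  have : ∀ i ∈ Finset.range S.p, (S.Blk m i ∪ S.Gap m i).card = S.lenB i + S.lenG i := by
    intro i hi
    have hi' := Finset.mem_range.mp hi
    rw [Finset.card_union_of_disjoint (hbg i hi')]
    rw [(hsizes i hi').2.1, (hsizes i hi').2.2.2.2]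
  rw [Finset.sum_congr rfl this] at hcb
  omega

end Derived

end BSLib

namespace BSLib

section Walk

variable (m s n : ℕ) (A : Finset ℕ) (S : CircData)

lemma cpt_add_period (N x a : ℕ) : cpt N x (a + N) = cpt N x a := by
  rw [← cpt_mod N x (a + N), Nat.add_mod_right, cpt_mod]

/-- walk facts on one chunk: block sum 0, prefixes ≥ 0, strict prefixes ≥ 1,
gap extension values, chunk total. -/
lemma chunk_facts (hm1 : 1 ≤ m) (hs1 : 1 ≤ s) (hA : A ⊆ Finset.Icc 1 m) (hAcard : A.card = n)
    (hmn : m = (s + 1) * n + s) (hS : IsBlockStructure m A ((s : ℝ) + 1) S) :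
    ∀ i < S.p,
      (∀ r ≤ S.lenG i, wsum m s A (S.b i) (S.lenB i + r) = -(r : ℤ)) ∧
      (∀ t, 0 < t → t < S.lenB i → 1 ≤ wsum m s A (S.b i) t) ∧
      (∀ t ≤ S.lenB i, 0 ≤ wsum m s A (S.b i) t) ∧
      (∀ t ≤ S.lenB i + S.lenG i, -(S.lenG i : ℤ) ≤ wsum m s A (S.b i) t) := by
  have hsizes := blk_sizes m s n A S hm1 hs1 hA hAcard hmn hS
  have htot := chunks_total m s n A S hm1 hs1 hA hAcard hmn hS
  obtain ⟨hp, hlenB, hcons, hwrap, hpart, hdisj, hbg, hbA, hgA, hiii, hiv⟩ := hS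
  intro i hi
  obtain ⟨hlBm, hbcard, hlBeq, hlGm, hgcard⟩ := hsizes i hi
  have hchunk : S.lenB i + S.lenG i ≤ m := by
    calc S.lenB i + S.lenG i ≤ ∑ j ∈ Finset.range S.p, (S.lenB j + S.lenG j) :=
          Finset.single_le_sum (f := fun j => S.lenB j + S.lenG j) (fun j _ => Nat.zero_le _) (Finset.mem_range.mpr hi)
      _ = m := htot
  -- block sum is 0
  have hblk0 : wsum m s A (S.b i) (S.lenB i) = 0 := by
    rw [wsum]
    have : ((A ∩ cblock m (S.b i) (S.lenB i)).card : ℤ) = (A ∩ S.Blk m i).card := by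
      rfl
    rw [this]
    have : (S.lenB i : ℤ) = ((s : ℤ) + 1) * ((A ∩ S.Blk m i).card : ℤ) := by
      exact_mod_cast congrArg (Nat.cast (R := ℤ)) hlBeq
    omega
  -- gap extension
  have hgext : ∀ r ≤ S.lenG i, wsum m s A (S.b i) (S.lenB i + r) = -(r : ℤ) := by
    intro r
    induction r with
    | zero => intro _; simpa using hblk0
    | succ r ih =>
      intro hr
      have hre : S.lenB i + (r + 1) = (S.lenB i + r) + 1 := by omega
      rw [hre, wsum_succ m s A _ _ (by omega)]
      rw [ih (by omega)]
      have hmem : cpt m (S.b i) (S.lenB i + r) ∈ S.Gap m i := by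
        rw [CircData.Gap, ← cpt_cpt]
        exact mem_cblock_of_lt m _ _ r (by omega)
      rw [if_neg (hgA i hi _ hmem)]
      push_cast; ring
  -- strict prefixes
  have hpref1 : ∀ t, 0 < t → t < S.lenB i → 1 ≤ wsum m s A (S.b i) t := by
    intro t ht0 htl
    have hreal := hiv i hi t ht0 htl
    have hcardt : (cblock m (S.b i) t).card = t := card_cblock m _ _ (by omega)
    rw [hcardt, Finset.inter_comm] at hreal
    have : (t : ℝ) + 1 ≤ ((s : ℝ) + 1) * ((A ∩ cblock m (S.b i) t).card : ℝ) := hreal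
    have hz : (t : ℤ) + 1 ≤ ((s : ℤ) + 1) * ((A ∩ cblock m (S.b i) t).card : ℤ) := by
      exact_mod_cast this
    rw [wsum]; omega
  have hpref0 : ∀ t ≤ S.lenB i, 0 ≤ wsum m s A (S.b i) t := by
    intro t ht
    rcases Nat.eq_or_lt_of_le ht with h | h
    · rw [h, hblk0]
    · rcases Nat.eq_zero_or_pos t with h0 | h0
      · rw [h0, wsum_zero]
      · linarith [hpref1 t h0 h]
  refine ⟨hgext, hpref1, hpref0, ?_⟩
  intro t ht
  rcases le_or_gt t (S.lenB i) with h | h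
  · linarith [hpref0 t h]
  · have : t = S.lenB i + (t - S.lenB i) := by omega
    rw [this, hgext (t - S.lenB i) (by omega)]
    omega

end Walk

end BSLib

namespace BSLib

section G1G2

variable (m s n : ℕ) (A : Finset ℕ) (S : CircData)

/-- Main structural lemma (G1): every arc ending at a gap point has weighted sum ≤ −1. -/
lemma gap_arc_neg (hm1 : 1 ≤ m) (hs1 : 1 ≤ s) (hA : A ⊆ Finset.Icc 1 m) (hAcard : A.card = n)
    (hmn : m = (s + 1) * n + s) (hS : IsBlockStructure m A ((s : ℝ) + 1) S) :
    ∀ z ∈ S.gapsUnion m, ∀ u L, 1 ≤ L → L ≤ m → cpt m u (L - 1) = z →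
      wsum m s A u L ≤ -1 := by
  have hsizes := blk_sizes m s n A S hm1 hs1 hA hAcard hmn hS
  have htot := chunks_total m s n A S hm1 hs1 hA hAcard hmn hS
  have hfacts := chunk_facts m s n A S hm1 hs1 hA hAcard hmn hS
  obtain ⟨hp, hlenB, hcons, hwrap, hpart, hdisj, hbg, hbA, hgA, hiii, hiv⟩ := hS
  have hchunk : ∀ i < S.p, S.lenB i + S.lenG i ≤ m := by
    intro i hi
    calc S.lenB i + S.lenG i
        ≤ ∑ j ∈ Finset.range S.p, (S.lenB j + S.lenG j) :=
          Finset.single_le_sum (f := fun j => S.lenB j + S.lenG j)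
            (fun j _ => Nat.zero_le _) (Finset.mem_range.mpr hi)
      _ = m := htot
  have hbIcc : ∀ i < S.p, S.b i ∈ Finset.Icc 1 m := fun i hi => hA (hbA i hi)
  -- previous chunk
  have hprev : ∀ i < S.p, ∃ j < S.p,
      S.b i = cpt m (S.b j) (S.lenB j + S.lenG j) := by
    intro i hi
    rcases Nat.eq_zero_or_pos i with h0 | h0
    · exact ⟨S.p - 1, by omega, by rw [h0]; exact hwrap⟩
    · refine ⟨i - 1, by omega, ?_⟩
      have := hcons (i - 1) (by omega)
      rwa [Nat.sub_add_cancel h0] at this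
  -- chunk total sums
  have hchunksum : ∀ i < S.p,
      wsum m s A (S.b i) (S.lenB i + S.lenG i) = -(S.lenG i : ℤ) := by
    intro i hi
    exact (hfacts i hi).1 (S.lenG i) le_rfl
  -- Clem : arcs ending just before b i have sum ≤ 0
  have Clem : ∀ L, L ≤ m → ∀ i < S.p, wsum m s A (cpt m (S.b i) (m - L)) L ≤ 0 := by
    intro L
    induction L using Nat.strong_induction_on with
    | _ L IH =>
      intro hLm i hi
      rcases Nat.eq_zero_or_pos L with h0 | h0
      · rw [h0, wsum_zero]
      obtain ⟨j, hj, hbij⟩ := hprev i hi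
      set lj := S.lenB j + S.lenG j with hlj
      have hlj1 : 1 ≤ lj := by have := hlenB j hj; omega
      have hljm : lj ≤ m := hchunk j hj
      rcases le_or_gt L lj with hc | hc
      · -- suffix of chunk j
        have hstart : cpt m (S.b i) (m - L) = cpt m (S.b j) (lj - L) := by
          rw [hbij, cpt_cpt]
          have : lj + (m - L) = (lj - L) + m := by omega
          rw [this, cpt_add_period]
        have hsplit := wsum_add m s A (S.b j) (lj - L) L (by omega)
        have : (lj - L) + L = lj := by omega
        rw [this] at hsplit
        rw [hstart]
        have h1 : -(S.lenG j : ℤ) ≤ wsum m s A (S.b j) (lj - L) := by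
          exact (hfacts j hj).2.2.2 (lj - L) (by omega)
        have h2 := hchunksum j hj
        rw [← hlj] at *
        omega
      · -- longer: peel off chunk j at the end
        have hsplit := wsum_add m s A (cpt m (S.b i) (m - L)) (L - lj) lj (by omega)
        have hLL : (L - lj) + lj = L := by omega
        rw [hLL] at hsplit
        have hmid : cpt m (cpt m (S.b i) (m - L)) (L - lj) = S.b j := by
          rw [cpt_cpt, hbij, cpt_cpt]
          have : lj + (m - L + (L - lj)) = m := by omega
          rw [this, cpt_N, cpt_zero m _ (hbIcc j hj)]
        have hfirst : cpt m (S.b i) (m - L) = cpt m (S.b j) (m - (L - lj)) := by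
          rw [hbij, cpt_cpt]
          congr 1
          omega
        rw [hsplit, hmid, hfirst]
        have h1 := IH (L - lj) (by omega) (by omega) j hj
        have h2 := hchunksum j hj
        rw [← hlj] at h2
        omega
  -- main argument
  intro z hz u L hL1 hLm hend
  obtain ⟨i, hi, hzg⟩ : ∃ i < S.p, z ∈ S.Gap m i := by
    obtain ⟨i, hi, hzi⟩ := Finset.mem_biUnion.mp hz
    exact ⟨i, Finset.mem_range.mp hi, hzi⟩
  obtain ⟨r, hr, hzr⟩ := (mem_cblock m _ _ z).mp hzg
  rw [cpt_cpt] at hzr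
  set full := S.lenB i + r + 1 with hfulldef
  have hfullle : full ≤ S.lenB i + S.lenG i := by omega
  have hfullm : full ≤ m := le_trans hfullle (hchunk i hi)
  have hwfull : wsum m s A (S.b i) full = -((r : ℤ) + 1) := by
    have := (hfacts i hi).1 (r + 1) (by omega)
    rw [show S.lenB i + (r + 1) = full by omega] at this
    rw [this]; push_cast; ring
  -- canonical start of the arc
  have hu0Icc : cpt m u 0 ∈ Finset.Icc 1 m := cpt_mem_Icc m u 0 hm1
  have hcanon : wsum m s A u L = wsum m s A (cpt m u 0) L := wsum_canon m s A u L
  have huz : cpt m (cpt m u 0) (L - 1) = z := by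
    rw [cpt_cpt, Nat.zero_add, hend]
  rcases le_or_gt L full with hc | hc
  · -- suffix of [b i .. z]
    have hstart : cpt m u 0 = cpt m (S.b i) (full - L) := by
      apply cpt_left_cancel m _ _ (L - 1) hu0Icc (cpt_mem_Icc m _ _ hm1)
      rw [huz, cpt_cpt]
      rw [show full - L + (L - 1) = S.lenB i + r by omega, hzr]
    have hsplit := wsum_add m s A (S.b i) (full - L) L (by omega)
    rw [show (full - L) + L = full by omega] at hsplit
    rw [hcanon, hstart]
    have hbound : -(r : ℤ) ≤ wsum m s A (S.b i) (full - L) := by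
      rcases le_or_gt (full - L) (S.lenB i) with h | h
      · linarith [(hfacts i hi).2.2.1 (full - L) h]
      · have := (hfacts i hi).1 (full - L - S.lenB i) (by omega)
        rw [show S.lenB i + (full - L - S.lenB i) = full - L by omega] at this
        rw [this]
        have : full - L - S.lenB i ≤ r := by omega
        omega
    omega
  · -- arc extends beyond [b i .. z]
    have hstart : cpt m u 0 = cpt m (S.b i) (m - (L - full)) := by
      apply cpt_left_cancel m _ _ (L - 1) hu0Icc (cpt_mem_Icc m _ _ hm1)
      rw [huz, cpt_cpt]
      rw [show m - (L - full) + (L - 1) = (S.lenB i + r) + m by omega, cpt_add_period, hzr]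
    have hsplit := wsum_add m s A (cpt m u 0) (L - full) full (by omega)
    rw [show (L - full) + full = L by omega] at hsplit
    have hmid : cpt m (cpt m u 0) (L - full) = S.b i := by
      rw [hstart, cpt_cpt, show m - (L - full) + (L - full) = m by omega, cpt_N,
        cpt_zero m _ (hbIcc i hi)]
    have h1 : wsum m s A (cpt m u 0) (L - full) ≤ 0 := by
      rw [hstart]
      exact Clem (L - full) (by omega) i hi
    rw [hcanon, hsplit, hmid, hwfull]
    omega

/-- G2: a point of `[m]` all of whose ending arcs are negative lies in the gaps. -/
lemma newmin_mem_gaps (hm1 : 1 ≤ m) (hs1 : 1 ≤ s) (hA : A ⊆ Finset.Icc 1 m)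
    (hAcard : A.card = n) (hmn : m = (s + 1) * n + s)
    (hS : IsBlockStructure m A ((s : ℝ) + 1) S) (z : ℕ) (hz : z ∈ Finset.Icc 1 m)
    (harc : ∀ u L, 1 ≤ L → L ≤ m → cpt m u (L - 1) = z → wsum m s A u L ≤ -1) :
    z ∈ S.gapsUnion m := by
  have hsizes := blk_sizes m s n A S hm1 hs1 hA hAcard hmn hS
  have hfacts := chunk_facts m s n A S hm1 hs1 hA hAcard hmn hS
  obtain ⟨hp, hlenB, hcons, hwrap, hpart, hdisj, hbg, hbA, hgA, hiii, hiv⟩ := hS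
  rw [← hpart] at hz
  obtain ⟨i, hi, hzi⟩ := Finset.mem_biUnion.mp hz
  have hi' := Finset.mem_range.mp hi
  rcases Finset.mem_union.mp hzi with hblk | hgap
  · exfalso
    obtain ⟨t, ht, hzt⟩ := (mem_cblock m _ _ z).mp hblk
    have harc' := harc (S.b i) (t + 1) (by omega)
      (by have := (hsizes i hi').1; omega)
      (by rw [Nat.add_sub_cancel]; exact hzt)
    have : 0 ≤ wsum m s A (S.b i) (t + 1) := (hfacts i hi').2.2.1 (t + 1) (by omega)
    omega
  · exact Finset.mem_biUnion.mpr ⟨i, hi, hgap⟩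

end G1G2

end BSLib

namespace BSLib

section Start

variable (m s n : ℕ) (A : Finset ℕ)

/-- There is a point `start ∈ A` from which the walk stays above `-s` until
closing the full circle at exactly `-s`. -/
lemma exists_good_start (hm1 : 1 ≤ m) (hs1 : 1 ≤ s) (hn1 : 1 ≤ n)
    (hA : A ⊆ Finset.Icc 1 m) (hAcard : A.card = n) (hmn : m = (s + 1) * n + s) :
    ∃ start ∈ A, (∀ t < m, -(s : ℤ) < wsum m s A start t) ∧
      wsum m s A start m = -(s : ℤ) := by
  set P₀ : ℕ → ℤ := fun t => wsum m s A 1 t with hP₀def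
  have hP00 : P₀ 0 = 0 := wsum_zero m s A 1
  have hP0m : P₀ m = -(s : ℤ) := by
    show wsum m s A 1 m = -(s:ℤ)
    rw [wsum, cblock_full m 1 m hm1 le_rfl, Finset.inter_eq_left.mpr hA, hAcard]
    have hmz : (m : ℤ) = ((s : ℤ) + 1) * (n : ℤ) + (s : ℤ) := by exact_mod_cast hmn
    rw [hmz]; ring
  set G : ℕ → ℤ := fun t => P₀ (t % m) - (s : ℤ) * (t / m : ℕ) with hGdef
  have hGeval : ∀ t, G t = P₀ (t % m) - (s : ℤ) * ((t / m : ℕ) : ℤ) := fun t => rfl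
  have hGlow : ∀ t ≤ m, G t = P₀ t := by
    intro t ht
    rcases Nat.lt_or_ge t m with h | h
    · rw [hGeval, Nat.mod_eq_of_lt h, Nat.div_eq_of_lt h]; simp
    · have ht' : t = m := by omega
      rw [ht', hGeval, Nat.mod_self, Nat.div_self (by omega), hP00, hP0m]; simp
  have hGperiod : ∀ t, G (t + m) = G t - (s : ℤ) := by
    intro t
    rw [hGeval, hGeval, Nat.add_mod_right, Nat.add_div_right _ (by omega)]
    push_cast; ring
  have hGstep : ∀ t, G (t + 1) = G t + (if cpt m 1 t ∈ A then (s : ℤ) else -1) := by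
    intro t
    have hdm := Nat.div_add_mod t m
    have hrm : t % m < m := Nat.mod_lt t (by omega)
    have hcpt : cpt m 1 (t % m) = cpt m 1 t := cpt_mod m 1 t
    rcases Nat.lt_or_ge (t % m + 1) m with h | h
    · have he : t + 1 = m * (t / m) + (t % m + 1) := by omega
      have h1 : (t + 1) % m = t % m + 1 := by
        rw [he, Nat.mul_add_mod, Nat.mod_eq_of_lt h]
      have h2 : (t + 1) / m = t / m := by
        rw [he, Nat.mul_add_div (by omega), Nat.div_eq_of_lt h, Nat.add_zero]
      have hstep : P₀ (t % m + 1) = P₀ (t % m) + (if cpt m 1 t ∈ A then (s:ℤ) else -1) := by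
        rw [← hcpt]; exact wsum_succ m s A 1 (t % m) (by omega)
      rw [hGeval, hGeval, h1, h2, hstep]; ring
    · have hmul : m * (t / m + 1) = m * (t / m) + m := by ring
      have he : t + 1 = m * (t / m + 1) := by omega
      have h1 : (t + 1) % m = 0 := by rw [he, Nat.mul_mod_right]
      have h2 : (t + 1) / m = t / m + 1 := by
        rw [he, Nat.mul_div_cancel_left _ (by omega)]
      have hstep : P₀ m = P₀ (t % m) + (if cpt m 1 t ∈ A then (s:ℤ) else -1) := by
        rw [← hcpt]
        have := wsum_succ m s A 1 (t % m) (by omega)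
        rw [show t % m + 1 = m by omega] at this
        exact this
      rw [hGeval, hGeval, h1, h2, hP00]
      have hif : (if cpt m 1 t ∈ A then (s:ℤ) else -1) = P₀ m - P₀ (t % m) := by omega
      rw [hif, hP0m]; push_cast; ring
  have hGarc : ∀ a L, L ≤ m → wsum m s A (cpt m 1 a) L = G (a + L) - G a := by
    intro a L
    induction L with
    | zero => intro _; rw [wsum_zero]; simp
    | succ L ih =>
      intro hL
      rw [wsum_succ m s A _ L hL, ih (by omega), cpt_cpt, ← Nat.add_assoc,
        hGstep (a + L)]
      ring
  -- least minimizer of P₀ on [0, m]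
  obtain ⟨tstar, htsm, htsmin, hstrict⟩ :
      ∃ ts, ts ≤ m ∧ (∀ j ≤ m, P₀ ts ≤ P₀ j) ∧ (∀ j < ts, P₀ ts < P₀ j) := by
    have hex : ∃ t, t ≤ m ∧ ∀ j ≤ m, P₀ t ≤ P₀ j := by
      obtain ⟨t, ht, hmin⟩ := Finset.exists_min_image (Finset.range (m + 1)) P₀
        ⟨0, Finset.mem_range.mpr (by omega)⟩
      exact ⟨t, by have := Finset.mem_range.mp ht; omega,
        fun j hj => hmin j (Finset.mem_range.mpr (by omega))⟩
    obtain ⟨hm', hmin'⟩ := Nat.find_spec hex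
    refine ⟨Nat.find hex, hm', hmin', ?_⟩
    intro j hj
    have hjm : j ≤ m := by omega
    have hnot := Nat.find_min hex hj
    push_neg at hnot
    obtain ⟨j', hj', hlt⟩ := hnot hjm
    calc P₀ (Nat.find hex) ≤ P₀ j' := hmin' j' hj'
      _ < P₀ j := hlt
  -- skip to the first A-point after tstar
  obtain ⟨a, ha⟩ := Finset.card_pos.mp (by rw [hAcard]; omega : 0 < A.card)
  have haIcc := hA ha
  obtain ⟨eo, heoA, heo_min, heo_lt⟩ :
      ∃ eo, cpt m 1 (tstar + eo) ∈ A ∧ (∀ e' < eo, cpt m 1 (tstar + e') ∉ A) ∧ eo < m := by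
    have hexA : ∃ e, cpt m 1 (tstar + e) ∈ A := by
      refine ⟨cdist m (cpt m 1 tstar) a, ?_⟩
      rw [← cpt_cpt, cpt_cdist m _ a haIcc]; exact ha
    refine ⟨Nat.find hexA, Nat.find_spec hexA, fun e' he' => Nat.find_min hexA he', ?_⟩
    have h1 : Nat.find hexA ≤ cdist m (cpt m 1 tstar) a := Nat.find_min' hexA (by
      rw [← cpt_cpt, cpt_cdist m _ a haIcc]; exact ha)
    have h2 := cdist_lt m (cpt m 1 tstar) a (by omega)
    omega
  have hGrun : ∀ v ≤ eo, G (tstar + v) = G tstar - (v : ℤ) := by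
    intro v
    induction v with
    | zero => intro _; simp
    | succ v ih =>
      intro hv
      rw [← Nat.add_assoc, hGstep (tstar + v), ih (by omega),
        if_neg (heo_min v (by omega))]
      push_cast; ring
  have hGts : G tstar = P₀ tstar := hGlow tstar htsm
  have hGσ : G (tstar + eo) = P₀ tstar - (eo : ℤ) := by rw [hGrun eo le_rfl, hGts]
  have hseZ : (1 : ℤ) ≤ (s : ℤ) := by exact_mod_cast hs1
  refine ⟨cpt m 1 (tstar + eo), heoA, ?_, ?_⟩
  · intro t ht
    rw [hGarc (tstar + eo) t (by omega), hGσ]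
    have hkey : P₀ tstar - (eo : ℤ) - (s : ℤ) < G (tstar + eo + t) := by
      rcases Nat.lt_or_ge (tstar + eo + t) (m + 1) with h | h
      · rw [hGlow _ (by omega)]
        have := htsmin (tstar + eo + t) (by omega)
        omega
      · have hsplit : tstar + eo + t = (tstar + eo + t - m) + m := by omega
        rw [hsplit, hGperiod]
        rcases lt_trichotomy (tstar + eo + t - m) tstar with hv | hv | hv
        · have h1 := hstrict _ hv
          rw [hGlow (tstar + eo + t - m) (by omega)]
          omega
        · have heo1 : 1 ≤ eo := by omega
          rw [hv, hGts]
          omega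
        · have hc : tstar + eo + t - m - tstar < eo := by omega
          have h1 := hGrun (tstar + eo + t - m - tstar) (by omega)
          rw [show tstar + (tstar + eo + t - m - tstar) = tstar + eo + t - m by omega]
            at h1
          rw [h1, hGts]
          have : ((tstar + eo + t - m - tstar : ℕ) : ℤ) < (eo : ℤ) := by exact_mod_cast hc
          omega
    omega
  · rw [hGarc (tstar + eo) m le_rfl, hGperiod, hGσ]; ring

end Start

end BSLib

namespace BSLib

section Exist

/-- Existence of a block structure for any `A ⊆ [m]` with `|A| = n`, `m = (s+1)n+s`. -/
lemma exists_blockstructure (m s n : ℕ) (A : Finset ℕ) (hm1 : 1 ≤ m) (hs1 : 1 ≤ s)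
    (hn1 : 1 ≤ n) (hA : A ⊆ Finset.Icc 1 m) (hAcard : A.card = n)
    (hmn : m = (s + 1) * n + s) :
    ∃ S : CircData, IsBlockStructure m A ((s : ℝ) + 1) S := by
  classical
  obtain ⟨start, hstartA, hPb, hPc⟩ :=
    exists_good_start m s n A hm1 hs1 hn1 hA hAcard hmn
  have hstartIcc : start ∈ Finset.Icc 1 m := hA hstartA
  set P : ℕ → ℤ := fun t => wsum m s A start t with hPdef
  have hP0 : P 0 = 0 := wsum_zero m s A start
  have hstep : ∀ t < m, P (t + 1) = P t + (if cpt m start t ∈ A then (s : ℤ) else -1) :=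
    fun t ht => wsum_succ m s A start t (by omega)
  have harc : ∀ a L, a + L ≤ m → wsum m s A (cpt m start a) L = P (a + L) - P a := by
    intro a L h
    have := wsum_add m s A start a L h
    show wsum m s A (cpt m start a) L = wsum m s A start (a + L) - wsum m s A start a
    omega
  set BS : Finset ℕ :=
    (Finset.range m).filter (fun t => cpt m start t ∈ A ∧ ∀ j < t, P t ≤ P j) with hBSdef
  have hmemBS : ∀ t, t ∈ BS ↔ t < m ∧ cpt m start t ∈ A ∧ ∀ j < t, P t ≤ P j := by
    intro t
    rw [hBSdef, Finset.mem_filter, Finset.mem_range]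
  have h0BS : 0 ∈ BS := by
    rw [hmemBS]
    exact ⟨by omega, by rw [cpt_zero m start hstartIcc]; exact hstartA,
      fun j hj => absurd hj (Nat.not_lt_zero j)⟩
  set p : ℕ := BS.card with hpdef
  have hp : 0 < p := Finset.card_pos.mpr ⟨0, h0BS⟩
  set iso := BS.orderIsoOfFin (rfl : BS.card = p) with hisodef
  set T : ℕ → ℕ := fun i => if h : i < p then ((iso ⟨i, h⟩ : {x // x ∈ BS}) : ℕ) else m
    with hTdef
  have hT_mem : ∀ i, i < p → T i ∈ BS := by
    intro i h
    rw [hTdef]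
    simp only [dif_pos h]
    exact (iso ⟨i, h⟩).2
  have hT_lt_m : ∀ i, i < p → T i < m := by
    intro i h
    have := hT_mem i h
    rw [hmemBS] at this
    exact this.1
  have hT_top : ∀ i, p ≤ i → T i = m := by
    intro i h
    rw [hTdef]
    simp only [dif_neg (by omega : ¬ i < p)]
  have hT_strict : ∀ i j, i < j → j < p → T i < T j := by
    intro i j hij hj
    have hi : i < p := by omega
    rw [hTdef]
    simp only [dif_pos hi, dif_pos hj]
    have : (⟨i, hi⟩ : Fin p) < ⟨j, hj⟩ := by simp [Fin.lt_def]; omega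
    exact Subtype.coe_lt_coe.mpr (iso.lt_iff_lt.mpr this)
  have hT_zero : T 0 = 0 := by
    obtain ⟨k, hk⟩ := iso.surjective ⟨0, h0BS⟩
    have h1 : T 0 ≤ ((iso k : {x // x ∈ BS}) : ℕ) := by
      rw [hTdef]
      simp only [dif_pos hp]
      exact Subtype.coe_le_coe.mpr (iso.le_iff_le.mpr (by simp [Fin.le_def]))
    rw [hk] at h1
    simpa using h1
  have hT_succ : ∀ i, i < p → T i < T (i + 1) := by
    intro i hi
    rcases Nat.lt_or_ge (i + 1) p with h | h
    · exact hT_strict i (i + 1) (by omega) h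
    · rw [hT_top (i + 1) h]; exact hT_lt_m i hi
  have hT_mono : ∀ i j, i ≤ j → j ≤ p → T i ≤ T j := by
    intro i j hij hj
    rcases Nat.eq_or_lt_of_le hij with h | h
    · rw [h]
    · rcases Nat.lt_or_ge j p with h2 | h2
      · exact le_of_lt (hT_strict i j h h2)
      · rw [hT_top j (by omega)]
        rcases Nat.lt_or_ge i p with h3 | h3
        · exact le_of_lt (hT_lt_m i h3)
        · rw [hT_top i h3]
  have hT_between : ∀ t ∈ BS, ∀ i, i < p → T i < t → t < T (i + 1) → False := by
    intro t ht i hi h1 h2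
    obtain ⟨k, hk⟩ := iso.surjective ⟨t, ht⟩
    have hkt : ((iso k : {x // x ∈ BS}) : ℕ) = t := by rw [hk]
    rcases Nat.lt_or_ge (i + 1) p with h | h
    · -- i < k < i+1 impossible
      have hik : (⟨i, hi⟩ : Fin p) < k := by
        apply iso.lt_iff_lt.mp
        apply Subtype.coe_lt_coe.mp
        rw [hkt]
        rw [hTdef] at h1
        simpa only [dif_pos hi] using h1
      have hki : k < (⟨i + 1, h⟩ : Fin p) := by
        apply iso.lt_iff_lt.mp
        apply Subtype.coe_lt_coe.mp
        rw [hkt]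
        rw [hTdef] at h2
        simpa only [dif_pos h] using h2
      simp [Fin.lt_def] at hik hki
      omega
    · -- k ≤ i, so t ≤ T i
      have hki : (k : ℕ) ≤ i := by omega
      have : ((iso k : {x // x ∈ BS}) : ℕ) ≤ T i := by
        rw [hTdef]
        simp only [dif_pos hi]
        exact Subtype.coe_le_coe.mpr (iso.le_iff_le.mpr (by simp [Fin.le_def]; omega))
      omega
  -- first return times
  have hret_ex : ∀ i, i < p → ∃ u, T i < u ∧ u ≤ m ∧ P u ≤ P (T i) := by
    intro i hi
    refine ⟨m, hT_lt_m i hi, le_rfl, ?_⟩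
    have h1 : -(s:ℤ) < P (T i) := hPb (T i) (hT_lt_m i hi)
    have h2 : P m = -(s:ℤ) := hPc
    omega
  set ret : ℕ → ℕ := fun i => if h : i < p then Nat.find (hret_ex i h) else m with hretdef
  have hret_spec : ∀ i (h : i < p), T i < ret i ∧ ret i ≤ m ∧ P (ret i) ≤ P (T i) := by
    intro i h
    rw [hretdef]
    simp only [dif_pos h]
    exact Nat.find_spec (hret_ex i h)
  have hret_min : ∀ i (h : i < p), ∀ u, T i < u → u < ret i → P (T i) < P u := by
    intro i h u hu1 hu2
    rw [hretdef] at hu2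
    simp only [dif_pos h] at hu2
    have := Nat.find_min (hret_ex i h) hu2
    push_neg at this
    have h2 := (hret_spec i h).2.1
    exact this hu1 (by rw [hretdef] at *; simp only [dif_pos h] at *; omega)
  have hTA : ∀ i, i < p → cpt m start (T i) ∈ A := by
    intro i hi
    have := hT_mem i hi
    rw [hmemBS] at this
    exact this.2.1
  have hTmin : ∀ i, i < p → ∀ j < T i, P (T i) ≤ P j := by
    intro i hi
    have := hT_mem i hi
    rw [hmemBS] at this
    exact this.2.2
  have hsZ : (1 : ℤ) ≤ (s : ℤ) := by exact_mod_cast hs1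
  have hret_T1 : ∀ i (h : i < p), T i + 1 < ret i := by
    intro i h
    have h1 := (hret_spec i h).1
    by_contra hc
    have he : ret i = T i + 1 := by omega
    have h2 := hstep (T i) (hT_lt_m i h)
    rw [if_pos (hTA i h)] at h2
    have h3 := (hret_spec i h).2.2
    rw [he] at h3
    omega
  have hretEq : ∀ i (h : i < p), P (ret i) = P (T i) := by
    intro i h
    have h1 := hret_T1 i h
    have h2 := (hret_spec i h).2.1
    have h3 := (hret_spec i h).2.2
    have h4 : P (T i) < P (ret i - 1) :=
      hret_min i h (ret i - 1) (by omega) (by omega)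
    have h5 := hstep (ret i - 1) (by omega)
    rw [show ret i - 1 + 1 = ret i by omega] at h5
    rcases ite_eq_or_eq (cpt m start (ret i - 1) ∈ A) (s:ℤ) (-1) with h6 | h6 <;>
      rw [h6] at h5 <;> omega
  have hret_leT : ∀ i (h : i < p), ret i ≤ T (i + 1) := by
    intro i h
    by_contra hc
    push_neg at hc
    rcases Nat.lt_or_ge (i + 1) p with h2 | h2
    · have h3 := hTmin (i + 1) h2 (T i) (hT_strict i (i+1) (by omega) h2)
      have h4 := hret_min i h (T (i + 1)) (hT_strict i (i+1) (by omega) h2) hc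
      omega
    · rw [hT_top (i + 1) h2] at hc
      have := (hret_spec i h).2.1
      omega
  have htouch_ret : ∀ i (h : i < p), ∀ j < ret i, P (ret i) ≤ P j := by
    intro i h j hj
    rcases Nat.lt_trichotomy j (T i) with h1 | h1 | h1
    · rw [hretEq i h]; exact hTmin i h j h1
    · rw [hretEq i h, h1]
    · have := hret_min i h j h1 hj
      rw [hretEq i h]
      omega
  -- the gap run after each return
  have W4 : ∀ i (h : i < p), ∀ v, ret i + v ≤ T (i + 1) →
      (∀ j < ret i + v, P (ret i + v) ≤ P j) ∧ P (ret i + v) = P (T i) - (v : ℤ) ∧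
      (ret i + v < T (i + 1) → cpt m start (ret i + v) ∉ A) := by
    intro i h v
    have hTi1m : T (i + 1) ≤ m := by
      rcases Nat.lt_or_ge (i+1) p with h2 | h2
      · exact le_of_lt (hT_lt_m _ h2)
      · rw [hT_top _ h2]
    induction v with
    | zero =>
      intro hv
      refine ⟨fun j hj => htouch_ret i h j (by omega), by simpa using hretEq i h, ?_⟩
      intro hlt hmemA
      have hBS : ret i ∈ BS := by
        rw [hmemBS]
        exact ⟨by omega, by simpa using hmemA, fun j hj => htouch_ret i h j (by omega)⟩
      exact hT_between (ret i) hBS i h (hret_spec i h).1 (by omega)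
    | succ v ih =>
      intro hv
      obtain ⟨ih1, ih2, ih3⟩ := ih (by omega)
      have hnotA : cpt m start (ret i + v) ∉ A := ih3 (by omega)
      have hstepv := hstep (ret i + v) (by omega)
      rw [if_neg hnotA] at hstepv
      rw [show ret i + (v + 1) = ret i + v + 1 by omega]
      refine ⟨?_, by rw [hstepv, ih2]; push_cast; ring, ?_⟩
      · intro j hj
        rcases Nat.lt_or_ge j (ret i + v) with h1 | h1
        · have := ih1 j h1
          omega
        · have : j = ret i + v := by omega
          rw [this]
          omega
      · intro hlt hmemA
        have hBS : ret i + v + 1 ∈ BS := by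
          rw [hmemBS]
          refine ⟨by omega, by simpa using hmemA, ?_⟩
          intro j hj
          rcases Nat.lt_or_ge j (ret i + v) with h1 | h1
          · have := ih1 j h1; omega
          · have : j = ret i + v := by omega
            rw [this]; omega
        exact hT_between _ hBS i h (by have := (hret_spec i h).1; omega) (by omega)
  -- locate an offset in the chunks
  have hlocate : ∀ j, j < m → ∃ i, i < p ∧ T i ≤ j ∧ j < T (i + 1) := by
    intro j hj
    set Pr : ℕ → Prop := fun i => i < p ∧ T i ≤ j with hPrdef
    have hPr0 : Pr 0 := ⟨hp, by rw [hT_zero]; omega⟩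
    have hspec : Pr (Nat.findGreatest Pr p) :=
      Nat.findGreatest_spec (Nat.zero_le p) hPr0
    set i0 := Nat.findGreatest Pr p with hi0def
    refine ⟨i0, hspec.1, hspec.2, ?_⟩
    by_contra hc
    push_neg at hc
    have hi1p : i0 + 1 < p := by
      by_contra h2
      push_neg at h2
      rw [hT_top (i0 + 1) h2] at hc
      omega
    have hng : ¬ Pr (i0 + 1) :=
      Nat.findGreatest_is_greatest (n := p) (P := Pr) (by omega) (by omega)
    exact hng ⟨hi1p, hc⟩
  -- the candidate structure
  set Sd : CircData :=
    ⟨p, fun i => cpt m start (T i), fun i => ret i - T i, fun i => T (i + 1) - ret i⟩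
    with hSddef
  have hT1m : ∀ i, i < p → T (i + 1) ≤ m := by
    intro i hi
    rcases Nat.lt_or_ge (i + 1) p with h2 | h2
    · exact le_of_lt (hT_lt_m _ h2)
    · rw [hT_top _ h2]
  have hSBlk : ∀ i, Sd.Blk m i = cblock m (cpt m start (T i)) (ret i - T i) :=
    fun _ => rfl
  have hSGap : ∀ i, i < p → Sd.Gap m i = cblock m (cpt m start (ret i)) (T (i + 1) - ret i) := by
    intro i hi
    show cblock m (cpt m (cpt m start (T i)) (ret i - T i)) _ = _
    rw [cpt_cpt, show T i + (ret i - T i) = ret i from by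
      have := (hret_spec i hi).1; omega]
  have hOff : ∀ a len y, y ∈ cblock m (cpt m start a) len ↔
      ∃ o, a ≤ o ∧ o < a + len ∧ y = cpt m start o := by
    intro a len y
    rw [mem_cblock]
    constructor
    · rintro ⟨j, hj, rfl⟩
      exact ⟨a + j, by omega, by omega, by rw [cpt_cpt]⟩
    · rintro ⟨o, h1, h2, rfl⟩
      exact ⟨o - a, by omega, by rw [cpt_cpt]; congr 1; omega⟩
  have hOffInj : ∀ o o', o < m → o' < m → cpt m start o = cpt m start o' → o = o' := by
    intro o o' ho ho' h
    have := (cpt_inj_iff m start o o').mp h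
    rwa [Nat.mod_eq_of_lt ho, Nat.mod_eq_of_lt ho'] at this
  have hChunkOff : ∀ i, i < p → ∀ a, a ∈ Sd.Blk m i ∪ Sd.Gap m i →
      ∃ o, T i ≤ o ∧ o < T (i + 1) ∧ a = cpt m start o := by
    intro i hi a ha
    have h1 := (hret_spec i hi).1
    have h2 := hret_leT i hi
    rcases Finset.mem_union.mp ha with h | h
    · rw [hSBlk] at h
      obtain ⟨o, ho1, ho2, rfl⟩ := (hOff _ _ _).mp h
      exact ⟨o, ho1, by omega, rfl⟩
    · rw [hSGap i hi] at h
      obtain ⟨o, ho1, ho2, rfl⟩ := (hOff _ _ _).mp h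
      exact ⟨o, by omega, by omega, rfl⟩
  refine ⟨Sd, hp, ?_, ?_, ?_, ?_, ?_, ?_, ?_, ?_, ?_, ?_⟩
  · -- blocks nonempty
    intro i hi
    have hip : i < p := hi
    have := (hret_spec i hip).1
    show 0 < ret i - T i
    omega
  · -- consecutive
    intro i hi
    have hip1 : i + 1 < p := hi
    have hi' : i < p := by omega
    show cpt m start (T (i + 1)) = cpt m (cpt m start (T i)) _
    rw [cpt_cpt]
    congr 1
    have h1 := (hret_spec i hi').1
    have h2 := hret_leT i hi'
    show T (i + 1) = T i + ((ret i - T i) + (T (i + 1) - ret i))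
    omega
  · -- wrap-around
    have hp1 : p - 1 < p := by omega
    show cpt m start (T 0) = cpt m (cpt m start (T (p - 1))) _
    rw [cpt_cpt, hT_zero]
    have h1 := (hret_spec (p - 1) hp1).1
    have h2 := hret_leT (p - 1) hp1
    have h3 : T (p - 1 + 1) = m := hT_top _ (by omega)
    rw [show T (p - 1) + ((ret (p - 1) - T (p - 1)) + (T (p - 1 + 1) - ret (p - 1))) = m
      from by omega]
    rw [cpt_N, cpt_zero m start hstartIcc]
  · -- partition
    ext y
    simp only [Finset.mem_biUnion, Finset.mem_range]
    constructor
    · rintro ⟨i, hi, hy⟩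
      rcases Finset.mem_union.mp hy with h | h
      · rw [hSBlk] at h
        exact cblock_subset_Icc m _ _ hm1 h
      · rw [hSGap i hi] at h
        exact cblock_subset_Icc m _ _ hm1 h
    · intro hy
      have ho_lt : cdist m start y < m := cdist_lt m start y hm1
      have hyo : y = cpt m start (cdist m start y) := (cpt_cdist m start y hy).symm
      obtain ⟨i, hi, h1, h2⟩ := hlocate (cdist m start y) ho_lt
      refine ⟨i, hi, ?_⟩
      have hr1 := (hret_spec i hi).1
      have hr2 := hret_leT i hi
      rcases Nat.lt_or_ge (cdist m start y) (ret i) with h3 | h3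
      · apply Finset.mem_union_left
        rw [hSBlk]
        exact (hOff _ _ _).mpr ⟨cdist m start y, h1, by omega, hyo⟩
      · apply Finset.mem_union_right
        rw [hSGap i hi]
        exact (hOff _ _ _).mpr ⟨cdist m start y, h3, by omega, hyo⟩
  · -- pairwise disjoint
    intro i hi j hj hij
    have hip : i < p := hi
    have hjp : j < p := hj
    rw [Finset.disjoint_left]
    intro a hai haj
    obtain ⟨o, ho1, ho2, rfl⟩ := hChunkOff i hip a hai
    obtain ⟨o', hp1, hp2, heq⟩ := hChunkOff j hjp _ haj
    have hom : o < m := by have := hT1m i hip; omega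
    have hom' : o' < m := by have := hT1m j hjp; omega
    have : o = o' := hOffInj o o' hom hom' heq
    rcases lt_or_gt_of_ne hij with h | h
    · have := hT_mono (i + 1) j (by omega) (by omega)
      omega
    · have := hT_mono (j + 1) i (by omega) (by omega)
      omega
  · -- block and gap disjoint
    intro i hi
    have hip : i < p := hi
    rw [Finset.disjoint_left]
    intro a hab hag
    have hr1 := (hret_spec i hip).1
    have hr2 := hret_leT i hip
    rw [hSBlk] at hab
    rw [hSGap i hip] at hag
    obtain ⟨o, ho1, ho2, rfl⟩ := (hOff _ _ _).mp hab
    obtain ⟨o', hp1, hp2, heq⟩ := (hOff _ _ _).mp hag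
    have hom : o < m := by have := hT1m i hip; omega
    have hom' : o' < m := by have := hT1m i hip; omega
    have : o = o' := hOffInj o o' hom hom' heq
    omega
  · -- block starts in A
    intro i hi
    exact hTA i hi
  · -- gaps avoid A
    intro i hi
    have hip : i < p := hi
    intro x hx
    rw [hSGap i hip] at hx
    have hr1 := (hret_spec i hip).1
    have hr2 := hret_leT i hip
    obtain ⟨o, ho1, ho2, rfl⟩ := (hOff _ _ _).mp hx
    obtain ⟨_, _, h3⟩ := W4 i hip (o - ret i) (by omega)
    rw [show ret i + (o - ret i) = o from by omega] at h3
    exact h3 (by omega)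
  · -- condition (iii)
    intro i hi
    have hip : i < p := hi
    have hr1 := (hret_spec i hip).1
    have hr2 := hret_leT i hip
    have hr3 := hT1m i hip
    have hlB : ret i - T i ≤ m := by omega
    have hcard : (Sd.Blk m i).card = ret i - T i := by
      rw [hSBlk]; exact card_cblock m _ _ hlB
    have hws : wsum m s A (cpt m start (T i)) (ret i - T i) = 0 := by
      rw [harc (T i) (ret i - T i) (by omega),
        show T i + (ret i - T i) = ret i from by omega, hretEq i hip]
      ring
    rw [wsum] at hws
    have hZ : ((s:ℤ) + 1) * ((A ∩ cblock m (cpt m start (T i)) (ret i - T i)).card : ℤ)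
        = ((ret i - T i : ℕ) : ℤ) := by omega
    have hR : ((s:ℝ) + 1) * ((A ∩ cblock m (cpt m start (T i)) (ret i - T i)).card : ℝ)
        = ((ret i - T i : ℕ) : ℝ) := by exact_mod_cast hZ
    rw [hcard, hSBlk, hR]
    constructor <;> [linarith; linarith]
  · -- condition (iv)
    intro i hi t ht0 htl
    have hip : i < p := hi
    have htl' : t < ret i - T i := htl
    have hr1 := (hret_spec i hip).1
    have hr2 := hret_leT i hip
    have hr3 := hT1m i hip
    have h1 : P (T i) < P (T i + t) := hret_min i hip (T i + t) (by omega) (by omega)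
    have hws : wsum m s A (cpt m start (T i)) t = P (T i + t) - P (T i) :=
      harc (T i) t (by omega)
    rw [wsum] at hws
    have hZ : (t : ℤ) + 1 ≤ ((s:ℤ) + 1) * ((A ∩ cblock m (cpt m start (T i)) t).card : ℤ) := by
      omega
    show ((cblock m (cpt m start (T i)) t).card : ℝ) + 1
        ≤ ((s:ℝ) + 1) * ((cblock m (cpt m start (T i)) t ∩ A).card : ℝ)
    rw [card_cblock m _ _ (by omega), Finset.inter_comm]
    exact_mod_cast hZ

end Exist

end BSLib

namespace BSLib

section Selection

variable (m : ℕ)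

lemma cdist_sub (hm1 : 1 ≤ m) (a b c : ℕ) (ha : a ∈ Finset.Icc 1 m)
    (hb : b ∈ Finset.Icc 1 m) (hc : c ∈ Finset.Icc 1 m)
    (h : cdist m a b ≤ cdist m a c) : cdist m b c = cdist m a c - cdist m a b := by
  have h1 : cpt m a (cdist m a b + cdist m b c) = c := by
    rw [← cpt_cpt, cpt_cdist m a b hb, cpt_cdist m b c hc]
  have h2 : cpt m a (cdist m a c) = c := cpt_cdist m a c hc
  have h3 := (cpt_inj_iff m a _ _).mp (h1.trans h2.symm)
  have hu := cdist_lt m a b hm1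
  have hv := cdist_lt m b c hm1
  have hw := cdist_lt m a c hm1
  rw [Nat.mod_eq_of_lt hw] at h3
  rcases Nat.lt_or_ge (cdist m a b + cdist m b c) m with h4 | h4
  · rw [Nat.mod_eq_of_lt h4] at h3
    omega
  · rw [Nat.mod_eq_sub_mod h4, Nat.mod_eq_of_lt (by omega)] at h3
    omega

lemma adjacency (hm1 : 1 ≤ m) (X W : Finset ℕ) (hX : X.Nonempty) (hW : W.Nonempty)
    (hd : Disjoint X W) (hXI : X ⊆ Finset.Icc 1 m) (hWI : W ⊆ Finset.Icc 1 m) :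
    ∃ x ∈ X, ∃ w ∈ W, ∀ y ∈ X ∪ W, cdist m w y ≠ 0 → cdist m w x ≤ cdist m w y := by
  obtain ⟨x₀, hx₀⟩ := hX
  obtain ⟨w, hw, hwmin⟩ := Finset.exists_min_image W (fun w => cdist m w x₀) hW
  obtain ⟨x, hx, hxmin⟩ := Finset.exists_min_image X (fun x => cdist m w x) ⟨x₀, hx₀⟩
  refine ⟨x, hx, w, hw, ?_⟩
  intro y hy hne
  by_contra hlt
  push_neg at hlt
  rcases Finset.mem_union.mp hy with hyX | hyW
  · exact absurd (hxmin y hyX) (by omega)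
  · have h1 : cdist m w x ≤ cdist m w x₀ := hxmin x₀ hx₀
    have h2 : cdist m w y < cdist m w x₀ := by omega
    have h3 : cdist m y x₀ = cdist m w x₀ - cdist m w y :=
      cdist_sub m hm1 w y x₀ (hWI hw) (hWI hyW) (hXI hx₀) (by omega)
    have h4 := hwmin y hyW
    try simp only at h4
    omega

lemma selection (hm1 : 1 ≤ m) : ∀ k (X W : Finset ℕ), X.card = k → Disjoint X W →
    X ⊆ Finset.Icc 1 m → W ⊆ Finset.Icc 1 m → k ≤ W.card →
    ∃ Y, Y ⊆ W ∧ Y.card = k ∧ ∀ z ∈ W \ Y, ∀ u L, 1 ≤ L → L ≤ m → cpt m u (L - 1) = z →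
      (Y ∩ cblock m u L).card ≤ (X ∩ cblock m u L).card := by
  intro k
  induction k with
  | zero =>
    intro X W hXc hd hXI hWI hk
    refine ⟨∅, Finset.empty_subset W, Finset.card_empty, ?_⟩
    intro z _ u L _ _ _
    simp
  | succ k ih =>
    intro X W hXc hd hXI hWI hk
    have hXne : X.Nonempty := Finset.card_pos.mp (by omega)
    have hWne : W.Nonempty := Finset.card_pos.mp (by omega)
    obtain ⟨x, hx, w, hw, hadj⟩ := adjacency m hm1 X W hXne hWne hd hXI hWI
    obtain ⟨Y', hY'sub, hY'card, hY'cond⟩ := ih (X.erase x) (W.erase w)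
      (by rw [Finset.card_erase_of_mem hx, hXc]; omega)
      (Finset.disjoint_of_subset_left (Finset.erase_subset x X)
        (Finset.disjoint_of_subset_right (Finset.erase_subset w W) hd))
      (fun a ha => hXI (Finset.erase_subset x X ha))
      (fun a ha => hWI (Finset.erase_subset w W ha))
      (by rw [Finset.card_erase_of_mem hw]; omega)
    have hwY' : w ∉ Y' := fun hc => (Finset.notMem_erase w W) (hY'sub hc)
    refine ⟨insert w Y', Finset.insert_subset hw
      (hY'sub.trans (Finset.erase_subset w W)), ?_, ?_⟩
    · rw [Finset.card_insert_of_notMem hwY', hY'card]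
    · intro z hz u L hL1 hLm hend
      have hzW : z ∈ W := (Finset.mem_sdiff.mp hz).1
      have hzn : z ∉ insert w Y' := (Finset.mem_sdiff.mp hz).2
      have hzw : z ≠ w := fun hc => hzn (by rw [hc]; exact Finset.mem_insert_self w Y')
      have hzY' : z ∉ Y' := fun hc => hzn (Finset.mem_insert_of_mem hc)
      have hz' : z ∈ (W.erase w) \ Y' :=
        Finset.mem_sdiff.mpr ⟨Finset.mem_erase.mpr ⟨hzw, hzW⟩, hzY'⟩
      have hIH := hY'cond z hz' u L hL1 hLm hend
      by_cases hwJ : w ∈ cblock m u L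
      · -- the matched X-point x is also in the arc
        have hu0I : cpt m u 0 ∈ Finset.Icc 1 m := cpt_mem_Icc m u 0 hm1
        have hJc : cblock m u L = cblock m (cpt m u 0) L := cblock_canon m u L
        have hwJ' := hwJ
        rw [hJc, mem_cblock_iff_cdist m _ L w hLm hm1] at hwJ'
        obtain ⟨hwI, hjw⟩ := hwJ'
        have hzI : z ∈ Finset.Icc 1 m := hWI hzW
        have hzcan : cpt m (cpt m u 0) (L - 1) = z := by
          rw [cpt_cpt, Nat.zero_add]; exact hend
        have hjz : cdist m (cpt m u 0) z = L - 1 :=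
          (cdist_unique m _ z (L - 1) hzI (by omega) hzcan).symm
        have hjwz : cdist m (cpt m u 0) w ≤ cdist m (cpt m u 0) z := by omega
        have hwz : cdist m w z = (L - 1) - cdist m (cpt m u 0) w := by
          have := cdist_sub m hm1 (cpt m u 0) w z hu0I hwI hzI hjwz
          rw [hjz] at this; exact this
        have hwzne : cdist m w z ≠ 0 := by
          intro hc
          exact hzw (cdist_eq_zero m w z hwI hzI hc).symm
        have hwx : cdist m w x ≤ cdist m w z :=
          hadj z (Finset.mem_union_right X hzW) hwzne
        have hxI : x ∈ Finset.Icc 1 m := hXI hx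
        have hxoff : cpt m (cpt m u 0) (cdist m (cpt m u 0) w + cdist m w x) = x := by
          rw [← cpt_cpt, cpt_cdist m _ w hwI, cpt_cdist m w x hxI]
        have hxoff_lt : cdist m (cpt m u 0) w + cdist m w x < L := by omega
        have hxJ : x ∈ cblock m u L := by
          rw [hJc, mem_cblock]
          exact ⟨_, hxoff_lt, hxoff⟩
        -- counting
        have hYJ : insert w Y' ∩ cblock m u L = insert w (Y' ∩ cblock m u L) := by
          rw [Finset.insert_inter_of_mem hwJ]
        have hYcard : (insert w Y' ∩ cblock m u L).card
            = (Y' ∩ cblock m u L).card + 1 := by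
          rw [hYJ, Finset.card_insert_of_notMem
            (fun hc => hwY' (Finset.mem_inter.mp hc).1)]
        have hXJ : X ∩ cblock m u L = insert x (X.erase x ∩ cblock m u L) := by
          ext a
          simp only [Finset.mem_inter, Finset.mem_insert, Finset.mem_erase]
          constructor
          · rintro ⟨haX, haJ⟩
            by_cases hax : a = x
            · exact Or.inl hax
            · exact Or.inr ⟨⟨hax, haX⟩, haJ⟩
          · rintro (rfl | ⟨⟨_, haX⟩, haJ⟩)
            · exact ⟨hx, hxJ⟩
            · exact ⟨haX, haJ⟩
        have hXcard : (X ∩ cblock m u L).card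
            = (X.erase x ∩ cblock m u L).card + 1 := by
          rw [hXJ, Finset.card_insert_of_notMem
            (fun hc => (Finset.notMem_erase x X) (Finset.mem_inter.mp hc).1)]
        omega
      · have hYJ : (insert w Y' ∩ cblock m u L).card = (Y' ∩ cblock m u L).card := by
          rw [Finset.insert_inter_of_notMem hwJ]
        have hXmono : (X.erase x ∩ cblock m u L).card ≤ (X ∩ cblock m u L).card :=
          Finset.card_le_card (Finset.inter_subset_inter_right (Finset.erase_subset x X))
        omega

end Selection

end BSLib

open BSLib

/-- Corollary 3.2 of the paper, covering part. Let `d ≥ 1`, `l ≥ 1`,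
`d + l ≤ n`, `1 ≤ s ≤ ⌊(n−d−l)/(d+l+1)⌋`, `m = (n+1)s + n` and
`𝓘_{m,n,s+1} = {[A, f_{s+1}(A)] : A ⊆ [m], |A| = n}`. If `D ⊆ [m]` with `|D| = n + l`
is not covered by any element of `𝓘_{m,n,s+1}`, then no superset of `D` in `[m]` is
covered by an element of `𝓘_{m,n,s+1}`. -/
theorem not_covered_superset_on_m (d l n s m : ℕ) (hd : 1 ≤ d) (hl : 1 ≤ l)
    (hdl : d + l ≤ n) (hs1 : 1 ≤ s) (hs2 : s ≤ (n - d - l) / (d + l + 1))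
    (hm : m = (n + 1) * s + n)
    (D : Finset ℕ) (hD : D ⊆ Finset.Icc 1 m) (hDcard : D.card = n + l)
    (hnotcov : ∀ A : Finset ℕ, A ⊆ Finset.Icc 1 m → A.card = n →
      ∀ S : CircData, IsBlockStructure m A ((s : ℝ) + 1) S →
        ¬(A ⊆ D ∧ D ⊆ fdelta A S m)) :
    ∀ E : Finset ℕ, D ⊆ E → E ⊆ Finset.Icc 1 m →
      ∀ A : Finset ℕ, A ⊆ Finset.Icc 1 m → A.card = n →
        ∀ S : CircData, IsBlockStructure m A ((s : ℝ) + 1) S →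
          ¬(A ⊆ E ∧ E ⊆ fdelta A S m) := by
  intro E hDE hEm A hAm hAcard S hS
  rintro ⟨hAE, hEf⟩
  have hn1 : 1 ≤ n := by omega
  have hm1 : 1 ≤ m := by rw [hm]; omega
  have hmn : m = (s + 1) * n + s := by rw [hm]; ring
  set X : Finset ℕ := A \ D with hXdef
  set W : Finset ℕ := D \ A with hWdef
  have hW_gaps : ∀ z ∈ W, z ∈ S.gapsUnion m := by
    intro z hz
    obtain ⟨hzD, hzA⟩ := Finset.mem_sdiff.mp hz
    have : z ∈ fdelta A S m := hEf (hDE hzD)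
    rcases Finset.mem_union.mp this with h | h
    · exact absurd h hzA
    · exact h
  have hcard1 : (A ∩ D).card + X.card = A.card := Finset.card_inter_add_card_sdiff A D
  have hcard2 : (D ∩ A).card + W.card = D.card := Finset.card_inter_add_card_sdiff D A
  have hcomm : (D ∩ A).card = (A ∩ D).card := by rw [Finset.inter_comm]
  have hWX : W.card = X.card + l := by omega
  have hdXW : Disjoint X W := by
    rw [Finset.disjoint_left]
    intro a ha hb
    exact (Finset.mem_sdiff.mp ha).2 (Finset.mem_sdiff.mp hb).1
  obtain ⟨Y, hYW, hYcard, hYcond⟩ := selection m hm1 X.card X W rfl hdXW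
    (fun a ha => hAm ((Finset.mem_sdiff.mp ha).1))
    (fun a ha => hD ((Finset.mem_sdiff.mp ha).1))
    (by omega)
  set A' : Finset ℕ := (A ∩ D) ∪ Y with hA'def
  have hYD : Y ⊆ D := fun a ha => (Finset.mem_sdiff.mp (hYW ha)).1
  have hYnA : ∀ a ∈ Y, a ∉ A := fun a ha => (Finset.mem_sdiff.mp (hYW ha)).2
  have hdisjAY : Disjoint (A ∩ D) Y := by
    rw [Finset.disjoint_left]
    intro a ha hb
    exact hYnA a hb (Finset.mem_inter.mp ha).1
  have hA'card : A'.card = n := by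
    rw [hA'def, Finset.card_union_of_disjoint hdisjAY, hYcard]
    omega
  have hA'D : A' ⊆ D := by
    rw [hA'def]
    exact Finset.union_subset Finset.inter_subset_right hYD
  have hA'I : A' ⊆ Finset.Icc 1 m := hA'D.trans hD
  obtain ⟨S', hS'⟩ := exists_blockstructure m s n A' hm1 hs1 hn1 hA'I hA'card hmn
  apply hnotcov A' hA'I hA'card S' hS'
  refine ⟨hA'D, ?_⟩
  intro z hzD
  by_cases hzA' : z ∈ A'
  · exact Finset.mem_union_left _ hzA'
  · have hzA : z ∉ A := fun hc =>
      hzA' (Finset.mem_union_left _ (Finset.mem_inter.mpr ⟨hc, hzD⟩))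
    have hzW : z ∈ W := Finset.mem_sdiff.mpr ⟨hzD, hzA⟩
    have hzY : z ∉ Y := fun hc => hzA' (Finset.mem_union_right _ hc)
    apply Finset.mem_union_right
    apply newmin_mem_gaps m s n A' S' hm1 hs1 hA'I hA'card hmn hS' z (hD hzD)
    intro u L hL1 hLm hend
    have hG1 := gap_arc_neg m s n A S hm1 hs1 hAm hAcard hmn hS z (hW_gaps z hzW)
      u L hL1 hLm hend
    have hYX := hYcond z (Finset.mem_sdiff.mpr ⟨hzW, hzY⟩) u L hL1 hLm hend
    have hsplitA : ((A ∩ cblock m u L) ∩ D).card + ((A ∩ cblock m u L) \ D).card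
        = (A ∩ cblock m u L).card := Finset.card_inter_add_card_sdiff _ D
    have he1 : (A ∩ cblock m u L) ∩ D = (A ∩ D) ∩ cblock m u L := by
      ext a
      simp only [Finset.mem_inter, Finset.mem_sdiff]
      tauto
    have he2 : (A ∩ cblock m u L) \ D = X ∩ cblock m u L := by
      ext a
      simp only [Finset.mem_inter, Finset.mem_sdiff, hXdef]
      tauto
    rw [he1, he2] at hsplitA
    have hA'le : (A' ∩ cblock m u L).card ≤ (A ∩ cblock m u L).card := by
      have hsub : A' ∩ cblock m u L = ((A ∩ D) ∩ cblock m u L) ∪ (Y ∩ cblock m u L) := by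
        rw [hA'def, Finset.union_inter_distrib_right]
      have h1 : (A' ∩ cblock m u L).card
          ≤ ((A ∩ D) ∩ cblock m u L).card + (Y ∩ cblock m u L).card := by
        rw [hsub]; exact Finset.card_union_le _ _
      omega
    show wsum m s A' u L ≤ -1
    have hZ : ((A' ∩ cblock m u L).card : ℤ) ≤ ((A ∩ cblock m u L).card : ℤ) := by
      exact_mod_cast hA'le
    have hmul := mul_le_mul_of_nonneg_left hZ (show (0:ℤ) ≤ (s:ℤ) + 1 by positivity)
    rw [wsum] at hG1 ⊢
    omega
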